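/- Let F be a connected d-regular locally sparse graph on [n]. For every vertex w of F and every v with 3 ≤ v ≤ n−3, the number of closed subgraphs of F on v vertices that contain w with deg(w) < d inside the subgraph is at most 2d. -/

import Mathlib

open SimpleGraph

/-- The edge boundary of a subgraph `H` of `G`: edges of `G` with one endpoint in `H.verts`
and the other outside. -/
def edgeBoundary {V : Type*} (G : SimpleGraph V) (H : G.Subgraph) : Set (Sym2 V) :=
  {e | ∃ u v, e = s(u, v) ∧ G.Adj u v ∧ u ∈ H.verts ∧ v ∉ H.verts}

/-- `G` is `d`-regular. -/
def IsRegularGraph {V : Type*} (G : SimpleGraph V) (d : ℕ) : Prop :=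
  ∀ v, (G.neighborSet v).ncard = d

/-- `G` on `n` vertices is locally sparse: every subgraph on between 3 and `n - 3`
vertices has edge boundary of size at least `d + 1`. -/
def LocallySparse {n : ℕ} (G : SimpleGraph (Fin n)) (d : ℕ) : Prop :=
  ∀ H : G.Subgraph, 3 ≤ H.verts.ncard → H.verts.ncard ≤ n - 3 →
    d + 1 ≤ (edgeBoundary G H).ncard

/-- `Δ = d + 1` for odd `d`, `Δ = d + 2` for even `d`. -/
def Delta (d : ℕ) : ℕ := if Odd d then d + 1 else d + 2

/-- A closed subgraph: an induced subgraph whose edge boundary has size exactly `Δ`. -/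
def IsClosedSubgraph {V : Type*} (G : SimpleGraph V) (d : ℕ) (H : G.Subgraph) : Prop :=
  H.IsInduced ∧ (edgeBoundary G H).ncard = Delta d

open scoped Classical

namespace Aux2dB
variable {n d : ℕ} (G : SimpleGraph (Fin n))

noncomputable def cnt (S T : Finset (Fin n)) : ℕ :=
  ∑ x : Fin n, ∑ y : Fin n, if G.Adj x y ∧ x ∈ S ∧ y ∈ T then 1 else 0

noncomputable def bdF (S : Finset (Fin n)) : ℕ := cnt G S Sᶜ

-- degree as a sum
lemma deg_sum (hreg : IsRegularGraph G d) (x : Fin n) :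
    ∑ y : Fin n, (if G.Adj x y then 1 else 0) = d := by
  rw [← hreg x]
  rw [Set.ncard_eq_toFinset_card']
  have h : (G.neighborSet x).toFinset = Finset.univ.filter (fun y => G.Adj x y) := by
    ext y; rw [Set.mem_toFinset]; simp [neighborSet]
  rw [h, Finset.card_filter]

lemma cnt_univ (hreg : IsRegularGraph G d) (S : Finset (Fin n)) :
    cnt G S Finset.univ = d * S.card := by
  rw [cnt]
  have h1 : ∀ x : Fin n, (∑ y : Fin n, if G.Adj x y ∧ x ∈ S ∧ y ∈ Finset.univ then 1 else 0)
      = if x ∈ S then d else 0 := by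
    intro x
    by_cases hx : x ∈ S
    · simp only [hx, if_true]
      rw [← deg_sum G hreg x]
      exact Finset.sum_congr rfl fun y _ => by simp [hx]
    · simp [hx]
  rw [Finset.sum_congr rfl fun x _ => h1 x]
  rw [Finset.sum_ite_mem, Finset.univ_inter, Finset.sum_const]
  ring

lemma handshake (hreg : IsRegularGraph G d) (S : Finset (Fin n)) :
    d * S.card = cnt G S S + bdF G S := by
  rw [← cnt_univ G hreg S, bdF]
  have : (Finset.univ : Finset (Fin n)) = S ∪ Sᶜ := by simp
  rw [show cnt G S Finset.univ = cnt G S (S ∪ Sᶜ) by rw [← this]]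
  rw [cnt, cnt, cnt, ← Finset.sum_add_distrib]
  refine Finset.sum_congr rfl fun x _ => ?_
  rw [← Finset.sum_add_distrib]
  refine Finset.sum_congr rfl fun y _ => ?_
  by_cases hy : y ∈ S <;> simp [hy]


lemma edgeBoundary_ncard (H : G.Subgraph) :
    (edgeBoundary G H).ncard = cnt G H.verts.toFinset (H.verts.toFinset)ᶜ := by
  classical
  set P : Finset (Fin n × Fin n) :=
    Finset.univ.filter (fun p => G.Adj p.1 p.2 ∧ p.1 ∈ H.verts ∧ p.2 ∉ H.verts) with hP
  have h1 : edgeBoundary G H = ↑(P.image fun p => s(p.1, p.2)) := by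
    ext e
    simp only [edgeBoundary, Set.mem_setOf_eq, Finset.coe_image, Set.mem_image,
      Finset.mem_coe, hP, Finset.mem_filter, Finset.mem_univ, true_and]
    constructor
    · rintro ⟨u, v, rfl, hadj, hu, hv⟩
      exact ⟨(u, v), ⟨hadj, hu, hv⟩, rfl⟩
    · rintro ⟨⟨u, v⟩, ⟨hadj, hu, hv⟩, rfl⟩
      exact ⟨u, v, rfl, hadj, hu, hv⟩
  rw [h1, Set.ncard_coe_finset]
  have h2 : (P.image fun p => s(p.1, p.2)).card = P.card := by
    apply Finset.card_image_of_injOn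
    rintro ⟨u, v⟩ hu ⟨u', v'⟩ hv heq
    simp only [hP, Finset.mem_coe, Finset.mem_filter] at hu hv
    rw [Sym2.eq_iff] at heq
    rcases heq with ⟨rfl, rfl⟩ | ⟨rfl, rfl⟩
    · rfl
    · exact absurd hu.2.2.1 hv.2.2.2
  rw [h2, hP, cnt]
  rw [Finset.card_filter]
  rw [Fintype.sum_prod_type]
  refine Finset.sum_congr rfl fun x _ => Finset.sum_congr rfl fun y _ => ?_
  congr 1
  simp [Set.mem_toFinset]

lemma bdF_eq_subgraph (H : G.Subgraph) :
    (edgeBoundary G H).ncard = bdF G H.verts.toFinset := edgeBoundary_ncard G H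

/-- complement symmetry -/
lemma cnt_comm' (S T : Finset (Fin n)) : cnt G S T = cnt G T S := by
  rw [cnt, Finset.sum_comm]
  refine Finset.sum_congr rfl fun y _ => Finset.sum_congr rfl fun x _ => ?_
  by_cases h : G.Adj x y
  · simp [h, h.symm, and_comm]
  · have h2 : ¬ G.Adj y x := fun h' => h h'.symm
    simp [h, h2]

lemma bdF_compl (S : Finset (Fin n)) : bdF G S = bdF G Sᶜ := by
  rw [bdF, bdF, compl_compl, cnt_comm']

/-- Local sparsity in Finset form. -/
lemma sparse_finset (hls : LocallySparse G d) (S : Finset (Fin n))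
    (h3 : 3 ≤ S.card) (hn : S.card ≤ n - 3) : d + 1 ≤ bdF G S := by
  classical
  set H : G.Subgraph :=
    { verts := ↑S
      Adj := fun u v => G.Adj u v ∧ u ∈ S ∧ v ∈ S
      adj_sub := fun h => h.1
      edge_vert := fun h => h.2.1
      symm := ⟨fun u v h => ⟨h.1.symm, h.2.2, h.2.1⟩⟩ } with hH
  have hverts : H.verts = ↑S := rfl
  have hcard : H.verts.ncard = S.card := by rw [hverts, Set.ncard_coe_finset]
  have := hls H (by rw [hcard]; exact h3) (by rw [hcard]; exact hn)
  rwa [bdF_eq_subgraph, hverts, Finset.toFinset_coe] at this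
lemma cnt_comm (S T : Finset (Fin n)) : cnt G S T = cnt G T S := by
  rw [cnt, Finset.sum_comm]
  refine Finset.sum_congr rfl fun y _ => Finset.sum_congr rfl fun x _ => ?_
  by_cases h : G.Adj x y
  · simp [h, h.symm, and_comm]
  · have h2 : ¬ G.Adj y x := fun h' => h h'.symm
    simp [h, h2]

lemma cnt_union_left {S S' : Finset (Fin n)} (h : Disjoint S S') (T : Finset (Fin n)) :
    cnt G (S ∪ S') T = cnt G S T + cnt G S' T := by
  rw [cnt, cnt, cnt, ← Finset.sum_add_distrib]
  refine Finset.sum_congr rfl fun x _ => ?_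
  rw [← Finset.sum_add_distrib]
  refine Finset.sum_congr rfl fun y _ => ?_
  have hns : x ∈ S → x ∉ S' := fun hs => Finset.disjoint_left.mp h hs
  by_cases hx : x ∈ S <;> by_cases hx' : x ∈ S' <;>
    simp [Finset.mem_union, hx, hx'] <;> tauto

lemma cnt_union_right (S : Finset (Fin n)) {T T' : Finset (Fin n)} (h : Disjoint T T') :
    cnt G S (T ∪ T') = cnt G S T + cnt G S T' := by
  rw [cnt_comm, cnt_union_left G h, cnt_comm, cnt_comm G T']

lemma cnt_pos {S T : Finset (Fin n)} {w y : Fin n} (hw : w ∈ S) (hy : y ∈ T)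
    (h : G.Adj w y) : 1 ≤ cnt G S T := by
  have t1 : (1:ℕ) ≤ ∑ y' : Fin n, if G.Adj w y' ∧ w ∈ S ∧ y' ∈ T then 1 else 0 := by
    refine le_trans ?_ (Finset.single_le_sum (f := fun y' => if G.Adj w y' ∧ w ∈ S ∧ y' ∈ T then 1 else 0) (fun _ _ => Nat.zero_le _) (Finset.mem_univ y))
    simp [h, hw, hy]
  exact le_trans t1 (Finset.single_le_sum (f := fun x => ∑ y' : Fin n, if G.Adj x y' ∧ x ∈ S ∧ y' ∈ T then 1 else 0) (fun _ _ => Nat.zero_le _) (Finset.mem_univ w))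

lemma cnt_singleton_left (x : Fin n) (T : Finset (Fin n)) :
    cnt G {x} T = ∑ y : Fin n, if G.Adj x y ∧ y ∈ T then 1 else 0 := by
  rw [cnt]
  rw [Finset.sum_eq_single_of_mem x (Finset.mem_univ x)]
  · refine Finset.sum_congr rfl fun y _ => by simp
  · intro b _ hb
    refine Finset.sum_eq_zero fun y _ => by simp [hb]

lemma cnt_singleton_singleton (x z : Fin n) :
    cnt G {x} {z} = if G.Adj x z then 1 else 0 := by
  rw [cnt_singleton_left]
  rw [Finset.sum_eq_single_of_mem z (Finset.mem_univ z)]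
  · simp
  · intro b _ hb; simp [hb]

lemma cnt_singleton_le (x : Fin n) (T : Finset (Fin n)) : cnt G {x} T ≤ T.card := by
  rw [cnt_singleton_left]
  calc (∑ y : Fin n, if G.Adj x y ∧ y ∈ T then 1 else 0)
      ≤ ∑ y : Fin n, if y ∈ T then 1 else 0 := by
        refine Finset.sum_le_sum fun y _ => ?_
        split_ifs <;> simp_all
    _ = T.card := by simp

lemma cnt_self_even (S : Finset (Fin n)) : Even (cnt G S S) := by
  classical
  induction S using Finset.induction with
  | empty => simp [cnt]
  | @insert a S ha ih =>
    have hdisj : Disjoint ({a} : Finset (Fin n)) S := by simp [ha]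
    have h1 : insert a S = {a} ∪ S := by rw [Finset.insert_eq]
    rw [h1, cnt_union_left G hdisj, cnt_union_right G _ hdisj, cnt_union_right G _ hdisj]
    have haa : cnt G {a} {a} = 0 := by simp [cnt_singleton_singleton]
    have hsym : cnt G S {a} = cnt G {a} S := cnt_comm G S {a}
    rw [haa, hsym]
    obtain ⟨k, hk⟩ := ih
    exact ⟨cnt G {a} S + k, by omega⟩



lemma delta_cases (d : ℕ) :
    (∃ k, d = 2*k+1 ∧ Delta d = d+1) ∨ (∃ k, d = 2*k ∧ Delta d = d+2) := by
  by_cases h : Odd d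
  · obtain ⟨k, hk⟩ := h
    exact Or.inl ⟨k, hk, by rw [Delta, if_pos ⟨k, hk⟩]⟩
  · rw [Nat.not_odd_iff_even] at h
    obtain ⟨k, hk⟩ := h
    refine Or.inr ⟨k, by omega, ?_⟩
    simp only [Delta, if_neg (by rw [Nat.not_odd_iff_even]; exact ⟨k, hk⟩)]

lemma delta_ge (d : ℕ) : d + 1 ≤ Delta d := by
  rcases delta_cases d with ⟨k, _, h⟩ | ⟨k, _, h⟩ <;> omega

lemma bdF_even_of_even (hreg : IsRegularGraph G d) (hd : Even d) (S : Finset (Fin n)) :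
    Even (bdF G S) := by
  have h1 := handshake G hreg S
  have h2 := cnt_self_even G S
  obtain ⟨k, hk⟩ := h2
  obtain ⟨m, hm⟩ := hd
  refine ⟨m * S.card - k, ?_⟩
  have : d * S.card = (m * S.card) + (m * S.card) := by rw [hm]; ring
  omega

lemma bdF_singleton (hreg : IsRegularGraph G d) (x : Fin n) : bdF G {x} = d := by
  have h1 := handshake G hreg {x}
  have h2 : cnt G {x} {x} = 0 := by
    rw [cnt_singleton_singleton]; simp
  simp only [Finset.card_singleton, mul_one] at h1
  omega

lemma cnt_pair_self_le (a b : Fin n) (hab : a ≠ b) :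
    cnt G ({a, b} : Finset (Fin n)) {a, b} ≤ 2 := by
  have h1 : ({a, b} : Finset (Fin n)) = {a} ∪ {b} := by
    ext z; simp
  have hd : Disjoint ({a} : Finset (Fin n)) {b} := Finset.disjoint_singleton.mpr hab
  rw [h1, cnt_union_left G hd, cnt_union_right G _ hd, cnt_union_right G _ hd]
  have e1 : cnt G {a} {a} = 0 := by rw [cnt_singleton_singleton]; simp
  have e2 : cnt G {b} {b} = 0 := by rw [cnt_singleton_singleton]; simp
  have e3 : cnt G {a} {b} ≤ 1 := by rw [cnt_singleton_singleton]; split_ifs <;> simp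
  have e4 : cnt G {b} {a} ≤ 1 := by rw [cnt_singleton_singleton]; split_ifs <;> simp
  omega

/-- Key lower bound: any set with 2 ≤ |S| ≤ n - 2 has boundary at least Δ. -/
lemma key1 (hd : 3 ≤ d) (hreg : IsRegularGraph G d) (hls : LocallySparse G d)
    (S : Finset (Fin n)) (h2 : 2 ≤ S.card) (hn : S.card ≤ n - 2) :
    Delta d ≤ bdF G S := by
  have hcardu : (Finset.univ : Finset (Fin n)).card = n := by simp
  have hcompl : Sᶜ.card = n - S.card := by
    rw [Finset.card_compl, Fintype.card_fin]
  have hnn : 4 ≤ n := by omega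
  -- helper for the |S| = 2 case
  have pair_case : ∀ T : Finset (Fin n), T.card = 2 → Delta d ≤ bdF G T := by
    intro T hT
    obtain ⟨a, b, hab, rfl⟩ := Finset.card_eq_two.mp hT
    have h1 := handshake G hreg {a, b}
    have h2 := cnt_pair_self_le G a b hab
    rw [hT] at h1
    rcases delta_cases d with ⟨k, hk, hΔ⟩ | ⟨k, hk, hΔ⟩ <;> omega
  rcases eq_or_lt_of_le h2 with he | h2'
  · exact pair_case S he.symm
  rcases eq_or_lt_of_le hn with he | hn'
  · rw [bdF_compl]
    exact pair_case Sᶜ (by omega)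
  -- middle case
  have hs := sparse_finset G hls S (by omega) (by omega)
  rcases delta_cases d with ⟨k, hk, hΔ⟩ | ⟨k, hk, hΔ⟩
  · omega
  · have hev := bdF_even_of_even G hreg ⟨k, by omega⟩ S
    obtain ⟨m, hm⟩ := hev
    omega


lemma pair_lemma (hd : 3 ≤ d) (hreg : IsRegularGraph G d) (hls : LocallySparse G d)
    {v : ℕ} (h3 : 3 ≤ v) (hv : v ≤ n - 3)
    {A B : Finset (Fin n)} (hA : A.card = v) (hB : B.card = v)
    (hbA : bdF G A = Delta d) (hbB : bdF G B = Delta d)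
    {w y : Fin n} (hwA : w ∈ A) (hwB : w ∈ B) (hyA : y ∉ A) (hyB : y ∉ B)
    (hadj : G.Adj w y) (hne : A ≠ B) :
    ∃ x x', A \ B = {x} ∧ B \ A = {x'} ∧
      2 * cnt G {x'} (A ∩ B) = d ∧ 2 * cnt G {x} ((A ∪ B)ᶜ) = d ∧
      cnt G (A ∩ B) ((A ∪ B)ᶜ) = 2 := by
  classical
  set I := A ∩ B with hI
  set X := A \ B with hX
  set Y := B \ A with hY
  set O := (A ∪ B)ᶜ with hO
  have hn6 : 6 ≤ n := by omega
  -- disjointness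
  have hIX : Disjoint I X := by
    rw [Finset.disjoint_left]; intro a ha hb
    simp [hI, hX, Finset.mem_inter, Finset.mem_sdiff] at ha hb; tauto
  have hIY : Disjoint I Y := by
    rw [Finset.disjoint_left]; intro a ha hb
    simp [hI, hY] at ha hb; tauto
  have hIO : Disjoint I O := by
    rw [Finset.disjoint_left]; intro a ha hb
    simp [hI, hO] at ha hb; tauto
  have hXY : Disjoint X Y := by
    rw [Finset.disjoint_left]; intro a ha hb
    simp [hX, hY] at ha hb; tauto
  have hXO : Disjoint X O := by
    rw [Finset.disjoint_left]; intro a ha hb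
    simp [hX, hO] at ha hb; tauto
  have hYO : Disjoint Y O := by
    rw [Finset.disjoint_left]; intro a ha hb
    simp [hY, hO] at ha hb; tauto
  have hIXY : Disjoint I (X ∪ Y) := Finset.disjoint_union_right.mpr ⟨hIX, hIY⟩
  have hXYO : Disjoint X (Y ∪ O) := Finset.disjoint_union_right.mpr ⟨hXY, hXO⟩
  have hYXO : Disjoint Y (X ∪ O) := Finset.disjoint_union_right.mpr ⟨hXY.symm, hYO⟩
  have hIYO : Disjoint I (Y ∪ O) := Finset.disjoint_union_right.mpr ⟨hIY, hIO⟩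
  have hIXO : Disjoint I (X ∪ O) := Finset.disjoint_union_right.mpr ⟨hIX, hIO⟩
  -- set identities
  have hAeq : A = I ∪ X := by ext a; simp [hI, hX]; tauto
  have hAc : Aᶜ = Y ∪ O := by ext a; simp [hY, hO]; tauto
  have hBeq : B = I ∪ Y := by ext a; simp [hI, hY]; tauto
  have hBc : Bᶜ = X ∪ O := by ext a; simp [hX, hO]; tauto
  have hIc : Iᶜ = X ∪ (Y ∪ O) := by ext a; simp [hI, hX, hY, hO]; tauto
  have hXc : Xᶜ = I ∪ (Y ∪ O) := by ext a; simp [hI, hX, hY, hO]; tauto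
  have hYc : Yᶜ = I ∪ (X ∪ O) := by ext a; simp [hI, hX, hY, hO]; tauto
  have hUeq : A ∪ B = I ∪ (X ∪ Y) := by ext a; simp [hI, hX, hY]; tauto
  -- boundary expansions
  have eA : bdF G A = cnt G I Y + cnt G I O + cnt G X Y + cnt G X O := by
    rw [bdF, hAc, hAeq, cnt_union_left G hIX, cnt_union_right G I hYO,
      cnt_union_right G X hYO]; ring
  have eB : bdF G B = cnt G I X + cnt G I O + cnt G Y X + cnt G Y O := by
    rw [bdF, hBc, hBeq, cnt_union_left G hIY, cnt_union_right G I hXO,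
      cnt_union_right G Y hXO]; ring
  have eI : bdF G I = cnt G I X + cnt G I Y + cnt G I O := by
    rw [bdF, hIc, cnt_union_right G I hXYO, cnt_union_right G I hYO]; ring
  have eX : bdF G X = cnt G X I + cnt G X Y + cnt G X O := by
    rw [bdF, hXc, cnt_union_right G X hIYO, cnt_union_right G X hYO]; ring
  have eY : bdF G Y = cnt G Y I + cnt G Y X + cnt G Y O := by
    rw [bdF, hYc, cnt_union_right G Y hIXO, cnt_union_right G Y hXO]; ring
  have eU : bdF G (A ∪ B) = cnt G I O + cnt G X O + cnt G Y O := by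
    rw [bdF, ← hO, hUeq, cnt_union_left G hIXY, cnt_union_left G hXY]; ring
  -- commutation
  have cXI : cnt G X I = cnt G I X := cnt_comm' G X I
  have cYI : cnt G Y I = cnt G I Y := cnt_comm' G Y I
  have cYX : cnt G Y X = cnt G X Y := cnt_comm' G Y X
  -- cardinalities
  have cA : I.card + X.card = v := by
    rw [← hA, hAeq, Finset.card_union_of_disjoint hIX]
  have cB : I.card + Y.card = v := by
    rw [← hB, hBeq, Finset.card_union_of_disjoint hIY]
  have hwI : w ∈ I := by simp [hI, hwA, hwB]
  have hyO : y ∈ O := by simp [hO, hyA, hyB]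
  have hIcard1 : 1 ≤ I.card := Finset.card_pos.mpr ⟨w, hwI⟩
  have hXne : X.Nonempty := by
    rw [Finset.nonempty_iff_ne_empty]
    intro h
    exact hne (Finset.eq_of_subset_of_card_le (by
      intro a ha
      by_contra hb
      have : a ∈ X := by simp [hX, ha, hb]
      simp [h] at this) (by omega))
  have hX1 : 1 ≤ X.card := Finset.card_pos.mpr hXne
  have hp0 : 1 ≤ cnt G I O := cnt_pos G hwI hyO hadj
  -- step 1 : X is a singleton
  have hXcard : X.card = 1 := by
    by_contra hc
    have h2X : 2 ≤ X.card := by omega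
    have bX : Delta d ≤ bdF G X := key1 G hd hreg hls X h2X (by omega)
    have bY : Delta d ≤ bdF G Y := key1 G hd hreg hls Y (by omega) (by omega)
    have hΔ := delta_ge d
    omega
  have hYcard : Y.card = 1 := by omega
  obtain ⟨x, hXx⟩ := Finset.card_eq_one.mp hXcard
  obtain ⟨x', hYx⟩ := Finset.card_eq_one.mp hYcard
  have bX : bdF G X = d := by rw [hXx]; exact bdF_singleton G hreg x
  have bY : bdF G Y = d := by rw [hYx]; exact bdF_singleton G hreg x'
  have bI : Delta d ≤ bdF G I := key1 G hd hreg hls I (by omega) (by omega)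
  have cU : (A ∪ B).card = I.card + X.card + Y.card := by
    rw [hUeq, Finset.card_union_of_disjoint hIXY, Finset.card_union_of_disjoint hXY]; ring
  have bU : Delta d ≤ bdF G (A ∪ B) :=
    key1 G hd hreg hls (A ∪ B) (by omega) (by omega)
  -- final numeric derivations
  rcases delta_cases d with ⟨k, hk, hΔ⟩ | ⟨k, hk, hΔ⟩
  · omega
  refine ⟨x, x', hXx, hYx, ?_, ?_, ?_⟩
  · rw [show cnt G {x'} I = cnt G I Y from by rw [← hYx, cnt_comm']]; omega
  · rw [show cnt G {x} O = cnt G X O from by rw [← hXx]]; omega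
  · omega


lemma triple_lemma (hd : 3 ≤ d) (hreg : IsRegularGraph G d) (hls : LocallySparse G d)
    {v : ℕ} (h3 : 3 ≤ v) (hv : v ≤ n - 3)
    {S1 S2 S3 : Finset (Fin n)} (hc1 : S1.card = v) (hc2 : S2.card = v) (hc3 : S3.card = v)
    (hb1 : bdF G S1 = Delta d) (hb2 : bdF G S2 = Delta d) (hb3 : bdF G S3 = Delta d)
    {w y : Fin n} (hw1 : w ∈ S1) (hw2 : w ∈ S2) (hw3 : w ∈ S3)
    (hy1 : y ∉ S1) (hy2 : y ∉ S2) (hy3 : y ∉ S3) (hadj : G.Adj w y)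
    (h12 : S1 ≠ S2) (h13 : S1 ≠ S3) (h23 : S2 ≠ S3) : False := by
  classical
  obtain ⟨a12, a21, e12, e21, f21, f12, g12⟩ :=
    pair_lemma G hd hreg hls h3 hv hc1 hc2 hb1 hb2 hw1 hw2 hy1 hy2 hadj h12
  obtain ⟨a13, a31, e13, e31, f31, f13, g13⟩ :=
    pair_lemma G hd hreg hls h3 hv hc1 hc3 hb1 hb3 hw1 hw3 hy1 hy3 hadj h13
  obtain ⟨a23, a32, e23, e32, f32, f23, g23⟩ :=
    pair_lemma G hd hreg hls h3 hv hc2 hc3 hb2 hb3 hw2 hw3 hy2 hy3 hadj h23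
  -- basic memberships
  have m12 : a12 ∈ S1 ∧ a12 ∉ S2 := by
    have : a12 ∈ S1 \ S2 := by rw [e12]; exact Finset.mem_singleton_self _
    simpa using this
  have m21 : a21 ∈ S2 ∧ a21 ∉ S1 := by
    have : a21 ∈ S2 \ S1 := by rw [e21]; exact Finset.mem_singleton_self _
    simpa using this
  have m13 : a13 ∈ S1 ∧ a13 ∉ S3 := by
    have : a13 ∈ S1 \ S3 := by rw [e13]; exact Finset.mem_singleton_self _
    simpa using this
  have m31 : a31 ∈ S3 ∧ a31 ∉ S1 := by
    have : a31 ∈ S3 \ S1 := by rw [e31]; exact Finset.mem_singleton_self _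
    simpa using this
  have m32 : a32 ∈ S3 ∧ a32 ∉ S2 := by
    have : a32 ∈ S3 \ S2 := by rw [e32]; exact Finset.mem_singleton_self _
    simpa using this
  by_cases hx : a12 ∈ S3
  · -- Case B : a12 ∈ S3
    -- a13 ∈ S2
    have hq2 : a13 ∈ S2 := by
      by_contra hq
      have : a13 ∈ S1 \ S2 := by simp [m13.1, hq]
      rw [e12, Finset.mem_singleton] at this
      exact m13.2 (this ▸ hx)
    -- a31 ∈ S2
    have hr2 : a31 ∈ S2 := by
      by_contra hr
      have : a31 ∈ S3 \ S2 := by simp [m31.1, hr]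
      rw [e32, Finset.mem_singleton] at this
      have hx32 : a12 ∈ S3 \ S2 := by simp [hx, m12.2]
      rw [e32, Finset.mem_singleton] at hx32
      exact m31.2 (by rw [this, ← hx32]; exact m12.1)
    -- S2 \ S1 = {a31}
    have hr21 : a31 = a21 := by
      have : a31 ∈ S2 \ S1 := by simp [hr2, m31.2]
      rw [e21, Finset.mem_singleton] at this; exact this
    -- S1 ∪ S2 = S1 ∪ S3
    have hU : S1 ∪ S2 = S1 ∪ S3 := by
      ext z
      simp only [Finset.mem_union]
      constructor
      · rintro (h | h)
        · exact Or.inl h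
        · by_cases hz : z ∈ S1
          · exact Or.inl hz
          · have : z ∈ S2 \ S1 := by simp [h, hz]
            rw [e21, Finset.mem_singleton] at this
            exact Or.inr (this ▸ (hr21 ▸ m31.1))
      · rintro (h | h)
        · exact Or.inl h
        · by_cases hz : z ∈ S1
          · exact Or.inl hz
          · have : z ∈ S3 \ S1 := by simp [h, hz]
            rw [e31, Finset.mem_singleton] at this
            exact Or.inr (this ▸ (hr21 ▸ hr2))
    -- split S1 ∩ S2 = (S1 ∩ S2 ∩ S3) ∪ {a13}
    have hsplit : S1 ∩ S2 = (S1 ∩ S2 ∩ S3) ∪ {a13} := by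
      ext z
      simp only [Finset.mem_inter, Finset.mem_union, Finset.mem_singleton]
      constructor
      · rintro ⟨hz1, hz2⟩
        by_cases hz3 : z ∈ S3
        · exact Or.inl ⟨⟨hz1, hz2⟩, hz3⟩
        · right
          have : z ∈ S1 \ S3 := by simp [hz1, hz3]
          rw [e13, Finset.mem_singleton] at this; exact this
      · rintro (⟨⟨hz1, hz2⟩, _⟩ | rfl)
        · exact ⟨hz1, hz2⟩
        · exact ⟨m13.1, hq2⟩
    have hdisj : Disjoint (S1 ∩ S2 ∩ S3) ({a13} : Finset (Fin n)) := by
      rw [Finset.disjoint_right]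
      intro z hz
      rw [Finset.mem_singleton] at hz
      subst hz
      simp only [Finset.mem_inter]
      rintro ⟨-, hz3⟩
      exact m13.2 hz3
    have hsum : cnt G (S1 ∩ S2) ((S1 ∪ S2)ᶜ) =
        cnt G (S1 ∩ S2 ∩ S3) ((S1 ∪ S2)ᶜ) + cnt G {a13} ((S1 ∪ S2)ᶜ) := by
      conv_lhs => rw [hsplit]
      exact cnt_union_left G hdisj _
    have hq13 : cnt G {a13} ((S1 ∪ S2)ᶜ) = cnt G {a13} ((S1 ∪ S3)ᶜ) := by rw [hU]
    have hwK : w ∈ S1 ∩ S2 ∩ S3 := by simp [hw1, hw2, hw3]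
    have hyO : y ∈ (S1 ∪ S2)ᶜ := by simp [hy1, hy2]
    have hpos : 1 ≤ cnt G (S1 ∩ S2 ∩ S3) ((S1 ∪ S2)ᶜ) := cnt_pos G hwK hyO hadj
    rw [hq13] at hsum
    -- 2 * cnt {a13} (S1 ∪ S3)ᶜ = d ≥ 3
    omega
  · -- Case A : a12 ∉ S3
    have h1312 : a13 = a12 := by
      have : a12 ∈ S1 \ S3 := by simp [m12.1, hx]
      rw [e13, Finset.mem_singleton] at this; exact this.symm
    -- S1 ∩ S3 = S1 ∩ S2
    have hKeq : S1 ∩ S3 = S1 ∩ S2 := by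
      have h1 : S1 ∩ S3 = S1 \ (S1 \ S3) := by rw [Finset.sdiff_sdiff_self_left]
      have h2 : S1 ∩ S2 = S1 \ (S1 \ S2) := by rw [Finset.sdiff_sdiff_self_left]
      rw [h1, h2, e13, e12, h1312]
    -- a31 ∉ S2
    have hz3nS2 : a31 ∉ S2 := by
      intro hc
      have : a31 ∈ S2 \ S1 := by simp [hc, m31.2]
      rw [e21, Finset.mem_singleton] at this
      -- then S2 = S3
      apply h23
      have hS2 : S2 = (S1 ∩ S2) ∪ (S2 \ S1) := by
        ext z; simp only [Finset.mem_union, Finset.mem_inter, Finset.mem_sdiff]; tauto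
      have hS3 : S3 = (S1 ∩ S3) ∪ (S3 \ S1) := by
        ext z; simp only [Finset.mem_union, Finset.mem_inter, Finset.mem_sdiff]; tauto
      rw [hS2, hS3, hKeq, e21, e31, this]
    have hz3O : a31 ∈ (S1 ∪ S2)ᶜ := by simp [m31.2, hz3nS2]
    have hOsplit : (S1 ∪ S2)ᶜ = {a31} ∪ ((S1 ∪ S2)ᶜ \ {a31}) := by
      ext z
      simp only [Finset.mem_union, Finset.mem_singleton, Finset.mem_sdiff, Finset.mem_compl]
      constructor
      · intro h
        by_cases hz : z = a31
        · exact Or.inl hz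
        · exact Or.inr ⟨h, hz⟩
      · rintro (rfl | ⟨h, -⟩)
        · simpa using hz3O
        · exact h
    have hdisj2 : Disjoint ({a31} : Finset (Fin n)) ((S1 ∪ S2)ᶜ \ {a31}) := by
      rw [Finset.disjoint_left]
      intro z hz hz'
      rw [Finset.mem_singleton] at hz
      subst hz
      simp at hz'
    have hsum : cnt G (S1 ∩ S2) ((S1 ∪ S2)ᶜ) =
        cnt G (S1 ∩ S2) {a31} + cnt G (S1 ∩ S2) ((S1 ∪ S2)ᶜ \ {a31}) := by
      conv_lhs => rw [hOsplit]
      exact cnt_union_right G _ hdisj2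
    have hcc : cnt G (S1 ∩ S2) {a31} = cnt G {a31} (S1 ∩ S3) := by
      rw [cnt_comm', hKeq]
    have hyO' : y ∈ (S1 ∪ S2)ᶜ \ {a31} := by
      simp only [Finset.mem_sdiff, Finset.mem_compl, Finset.mem_union, Finset.mem_singleton]
      exact ⟨by tauto, fun h => hy3 (h ▸ m31.1)⟩
    have hpos : 1 ≤ cnt G (S1 ∩ S2) ((S1 ∪ S2)ᶜ \ {a31}) :=
      cnt_pos G (by simp [hw1, hw2]) hyO' hadj
    rw [hcc] at hsum
    omega

lemma per_y_bound (hd : 3 ≤ d) (hreg : IsRegularGraph G d) (hls : LocallySparse G d)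
    {v : ℕ} (h3 : 3 ≤ v) (hv : v ≤ n - 3) (w y : Fin n) (hadj : G.Adj w y) :
    (Finset.univ.filter (fun S : Finset (Fin n) =>
      bdF G S = Delta d ∧ S.card = v ∧ w ∈ S ∧ y ∉ S)).card ≤ 2 := by
  classical
  by_contra hc
  push_neg at hc
  rw [show (2 : ℕ) < _ ↔ _ from Finset.two_lt_card_iff] at hc
  obtain ⟨S1, S2, S3, hS1, hS2, hS3, h12, h13, h23⟩ := hc
  simp only [Finset.mem_filter, Finset.mem_univ, true_and] at hS1 hS2 hS3
  exact triple_lemma G hd hreg hls h3 hv hS1.2.1 hS2.2.1 hS3.2.1 hS1.1 hS2.1 hS3.1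
    hS1.2.2.1 hS2.2.2.1 hS3.2.2.1 hS1.2.2.2 hS2.2.2.2 hS3.2.2.2 hadj h12 h13 h23

lemma induced_adj {H : G.Subgraph} (hind : H.IsInduced) {u x : Fin n} :
    H.Adj u x ↔ G.Adj u x ∧ u ∈ H.verts ∧ x ∈ H.verts := by
  constructor
  · intro h
    exact ⟨h.adj_sub, H.edge_vert h, H.edge_vert h.symm⟩
  · rintro ⟨h1, h2, h3⟩
    exact hind h2 h3 h1

lemma finite_subgraph : Finite G.Subgraph := by
  classical
  have hf : Function.Injective (fun H : G.Subgraph => (H.verts, H.Adj)) := by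
    intro H1 H2 h
    rw [Prod.mk.injEq] at h
    exact SimpleGraph.Subgraph.ext h.1 h.2
  exact Finite.of_injective _ hf

theorem main {v : ℕ} (hd : 3 ≤ d) (hconn : G.Connected)
    (hreg : IsRegularGraph G d) (hls : LocallySparse G d)
    (w : Fin n) (h3 : 3 ≤ v) (hv : v ≤ n - 3) :
    {H : G.Subgraph | IsClosedSubgraph G d H ∧ H.verts.ncard = v ∧
      w ∈ H.verts ∧ (H.neighborSet w).ncard < d}.ncard ≤ 2 * d := by
  classical
  have : Finite G.Subgraph := finite_subgraph G
  set 𝒮 := {H : G.Subgraph | IsClosedSubgraph G d H ∧ H.verts.ncard = v ∧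
      w ∈ H.verts ∧ (H.neighborSet w).ncard < d} with h𝒮
  set f : G.Subgraph → Finset (Fin n) := fun H => H.verts.toFinset with hf
  have hinj : Set.InjOn f 𝒮 := by
    intro H1 h1 H2 h2 heq
    have hv12 : H1.verts = H2.verts := by
      have heq' : H1.verts.toFinset = H2.verts.toFinset := heq
      rw [← Set.coe_toFinset H1.verts, ← Set.coe_toFinset H2.verts, heq']
    refine SimpleGraph.Subgraph.ext hv12 ?_
    funext a b
    have i1 : H1.IsInduced := h1.1.1
    have i2 : H2.IsInduced := h2.1.1
    rw [eq_iff_iff, induced_adj G i1, induced_adj G i2, hv12]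
  set NW : Finset (Fin n) := Finset.univ.filter (fun z => G.Adj w z) with hNW
  set BU : Finset (Finset (Fin n)) := NW.biUnion (fun z =>
    Finset.univ.filter (fun S : Finset (Fin n) =>
      bdF G S = Delta d ∧ S.card = v ∧ w ∈ S ∧ z ∉ S)) with hBU
  have himg : f '' 𝒮 ⊆ ↑BU := by
    rintro S ⟨H, hH, rfl⟩
    rw [h𝒮, Set.mem_setOf_eq] at hH
    obtain ⟨⟨hind, hbd⟩, hcard, hwH, hnb⟩ := hH
    have hb : bdF G (f H) = Delta d := by
      rw [hf, ← bdF_eq_subgraph, hbd]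
    have hcard' : (f H).card = v := by
      rw [hf, ← Set.ncard_eq_toFinset_card', hcard]
    have hwf : w ∈ f H := by rw [hf]; simpa using hwH
    -- find a neighbor outside
    have hex : ∃ z, G.Adj w z ∧ z ∉ H.verts := by
      by_contra hno
      push_neg at hno
      have heq : H.neighborSet w = G.neighborSet w := by
        ext u
        simp only [SimpleGraph.Subgraph.mem_neighborSet, mem_neighborSet]
        rw [induced_adj G hind]
        constructor
        · tauto
        · intro h; exact ⟨h, hwH, hno u h⟩
      rw [heq, hreg w] at hnb
      omega
    obtain ⟨z, hz1, hz2⟩ := hex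
    rw [Finset.mem_coe, hBU, Finset.mem_biUnion]
    refine ⟨z, by simp [hNW, hz1], ?_⟩
    simp only [Finset.mem_filter, Finset.mem_univ, true_and]
    exact ⟨hb, hcard', hwf, by rw [hf]; simpa using hz2⟩
  have h1 : 𝒮.ncard = (f '' 𝒮).ncard := (Set.ncard_image_of_injOn hinj).symm
  have h2 : (f '' 𝒮).ncard ≤ BU.card := by
    have := Set.ncard_le_ncard himg BU.finite_toSet
    rwa [Set.ncard_coe_finset] at this
  have h3' : BU.card ≤ ∑ z ∈ NW, (Finset.univ.filter (fun S : Finset (Fin n) =>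
      bdF G S = Delta d ∧ S.card = v ∧ w ∈ S ∧ z ∉ S)).card := Finset.card_biUnion_le
  have h4 : ∑ z ∈ NW, (Finset.univ.filter (fun S : Finset (Fin n) =>
      bdF G S = Delta d ∧ S.card = v ∧ w ∈ S ∧ z ∉ S)).card ≤ ∑ _z ∈ NW, 2 := by
    refine Finset.sum_le_sum fun z hz => ?_
    have hadj : G.Adj w z := by
      rw [hNW] at hz; simpa using hz
    exact per_y_bound G hd hreg hls h3 hv w z hadj
  have h5 : NW.card = d := by
    rw [hNW, Finset.card_filter, deg_sum G hreg w]
  have h6 : ∑ _z ∈ NW, 2 = 2 * d := by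
    rw [Finset.sum_const, h5]; ring
  omega

end Aux2dB

/-- In a connected locally sparse `d`-regular graph, for every vertex `w` and every
`3 ≤ v ≤ n - 3`, there are at most `2d` closed subgraphs on `v` vertices containing `w`
as a boundary vertex (i.e. with degree less than `d` inside the subgraph). -/
theorem at_most_2d_closed_subgraphs_at_boundary_vertex {n d : ℕ} (hd : 3 ≤ d)
    (G : SimpleGraph (Fin n)) (hconn : G.Connected)
    (hreg : IsRegularGraph G d) (hls : LocallySparse G d)
    (w : Fin n) (v : ℕ) (h3 : 3 ≤ v) (hv : v ≤ n - 3) :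
    {H : G.Subgraph | IsClosedSubgraph G d H ∧ H.verts.ncard = v ∧
      w ∈ H.verts ∧ (H.neighborSet w).ncard < d}.ncard ≤ 2 * d := by
  classical
  exact Aux2dB.main G hd hconn hreg hls w h3 hv
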